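/- If x and y are elements of a free group F of rank 2 that generate F, then (x, y) is a basis of F; that is, any generating pair of a free group of rank two is a free generating pair. -/

import Mathlib

namespace RFAux

/-- No cancelling adjacent pair. -/
def NC (M : List (Bool × Bool)) : Prop :=
  ∀ i c e, M[i]? = some (c, e) → M[i+1]? = some (c, !e) → False

variable (M : List (Bool × Bool))

def P (b e : Bool) (j : Fin (M.length + 1)) : Prop :=
  M[(j:ℕ)]? = some (b, e) ∨ (0 < (j:ℕ) ∧ M[(j:ℕ) - 1]? = some (b, !e))

instance (b e : Bool) : DecidablePred (P M b e) := fun _ => by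
  unfold P; infer_instance

def Fmap (b e : Bool) (j : Fin (M.length + 1)) (h : P M b e j) : Fin (M.length + 1) :=
  if hc : M[(j:ℕ)]? = some (b, e) then
    ⟨(j:ℕ) + 1, by
      obtain ⟨h1, -⟩ := List.getElem?_eq_some_iff.mp hc
      omega⟩
  else ⟨(j:ℕ) - 1, by omega⟩

theorem Fmap_val_pos (b e : Bool) (j : Fin (M.length + 1)) (h : P M b e j)
    (hc : M[(j:ℕ)]? = some (b, e)) : (Fmap M b e j h : ℕ) = (j:ℕ) + 1 := by
  rw [Fmap, dif_pos hc]

theorem Fmap_val_neg (b e : Bool) (j : Fin (M.length + 1)) (h : P M b e j)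
    (hc : ¬ M[(j:ℕ)]? = some (b, e)) : (Fmap M b e j h : ℕ) = (j:ℕ) - 1 := by
  rw [Fmap, dif_neg hc]

theorem Fmap_mem (b e : Bool) (j : Fin (M.length + 1)) (h : P M b e j) :
    P M b (!e) (Fmap M b e j h) := by
  by_cases hc : M[(j:ℕ)]? = some (b, e)
  · right
    rw [Fmap_val_pos M b e j h hc]
    exact ⟨Nat.succ_pos _, by simpa [Bool.not_not] using hc⟩
  · left
    obtain ⟨hj, hm⟩ := h.resolve_left hc
    rw [Fmap_val_neg M b e j h hc]
    exact hm

theorem Fmap_inv (hNC : NC M) (b e : Bool) (j : Fin (M.length + 1)) (h : P M b e j)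
    (h' : P M b (!e) (Fmap M b e j h)) : Fmap M b (!e) (Fmap M b e j h) h' = j := by
  apply Fin.ext
  by_cases hc : M[(j:ℕ)]? = some (b, e)
  · have hv : (Fmap M b e j h : ℕ) = (j:ℕ) + 1 := Fmap_val_pos M b e j h hc
    have hne : ¬ M[(Fmap M b e j h : ℕ)]? = some (b, !e) := by
      rw [hv]; exact fun hx => hNC (j:ℕ) b e hc hx
    rw [Fmap_val_neg M b (!e) _ h' hne, hv]
    omega
  · obtain ⟨hj, hm⟩ := h.resolve_left hc
    have hv : (Fmap M b e j h : ℕ) = (j:ℕ) - 1 := Fmap_val_neg M b e j h hc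
    have hme : M[(Fmap M b e j h : ℕ)]? = some (b, !e) := by rw [hv]; exact hm
    rw [Fmap_val_pos M b (!e) _ h' hme, hv]
    omega

def eqv (hNC : NC M) (b : Bool) : {j // P M b true j} ≃ {j // P M b false j} where
  toFun x := ⟨Fmap M b true x.1 x.2, by simpa using Fmap_mem M b true x.1 x.2⟩
  invFun x := ⟨Fmap M b false x.1 x.2, by simpa using Fmap_mem M b false x.1 x.2⟩
  left_inv x := Subtype.ext (by
    have := Fmap_inv M hNC b true x.1 x.2 (Fmap_mem M b true x.1 x.2)
    simpa using this)
  right_inv x := Subtype.ext (by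
    have := Fmap_inv M hNC b false x.1 x.2 (Fmap_mem M b false x.1 x.2)
    simpa using this)

noncomputable def sigma (hNC : NC M) (b : Bool) : Equiv.Perm (Fin (M.length + 1)) :=
  (eqv M hNC b).extendSubtype

theorem sigma_pos (hNC : NC M) {b : Bool} {j : ℕ} (hj : j < M.length)
    (hm : M[j]? = some (b, true)) :
    sigma M hNC b ⟨j, by omega⟩ = ⟨j + 1, by omega⟩ := by
  have hp : P M b true ⟨j, by omega⟩ := Or.inl hm
  rw [sigma, Equiv.extendSubtype_apply_of_mem _ _ hp]
  show Fmap M b true _ hp = _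
  apply Fin.ext
  rw [Fmap_val_pos M b true _ hp hm]

theorem sigma_neg (hNC : NC M) {b : Bool} {j : ℕ} (hj : j < M.length)
    (hm : M[j]? = some (b, false)) :
    sigma M hNC b ⟨j + 1, by omega⟩ = ⟨j, by omega⟩ := by
  have hp : P M b true ⟨j + 1, by omega⟩ := Or.inr ⟨Nat.succ_pos _, by simpa using hm⟩
  rw [sigma, Equiv.extendSubtype_apply_of_mem _ _ hp]
  show Fmap M b true _ hp = _
  have hne : ¬ M[j + 1]? = some (b, true) := fun hx => hNC j b false hm (by simpa using hx)
  apply Fin.ext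
  rw [Fmap_val_neg M b true _ hp hne]
  simp

end RFAux


namespace RFAux

theorem prod_eval (M : List (Bool × Bool)) (hNC : NC M) :
    ∀ k (hk : k ≤ M.length),
      ((M.take k).reverse.map
          (fun x => cond x.2 (sigma M hNC x.1) (sigma M hNC x.1)⁻¹)).prod
        ⟨0, Nat.succ_pos _⟩ = ⟨k, by omega⟩ := by
  intro k
  induction k with
  | zero => intro hk; simp
  | succ k ih =>
    intro hk
    have hk' : k < M.length := hk
    obtain ⟨⟨c, e⟩, hce⟩ : ∃ a, M[k]? = some a :=
      ⟨_, List.getElem?_eq_some_iff.mpr ⟨hk', rfl⟩⟩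
    rw [List.take_succ, hce]
    simp only [Option.toList_some, List.reverse_append, List.reverse_cons, List.reverse_nil,
      List.nil_append, List.singleton_append, List.map_cons, List.prod_cons]
    rw [Equiv.Perm.mul_apply, ih (le_of_lt hk')]
    cases e with
    | true =>
      show sigma M hNC c ⟨k, _⟩ = ⟨k + 1, _⟩
      exact sigma_pos M hNC hk' hce
    | false =>
      show (sigma M hNC c)⁻¹ ⟨k, _⟩ = ⟨k + 1, _⟩
      have h1 := sigma_neg M hNC hk' hce
      have h2 := congrArg (⇑(sigma M hNC c)⁻¹) h1
      rw [← Equiv.Perm.mul_apply, inv_mul_cancel, Equiv.Perm.one_apply] at h2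
      exact h2.symm

end RFAux

namespace RFAux

theorem nc_reverse_toWord (w : FreeGroup Bool) : NC w.toWord.reverse := by
  intro i c e h1 h2
  obtain ⟨hi1, e1⟩ := List.getElem?_eq_some_iff.mp h1
  obtain ⟨hi2, e2⟩ := List.getElem?_eq_some_iff.mp h2
  have hM : w.toWord.reverse = w.toWord.reverse.take i ++
      (c, e) :: (c, !e) :: w.toWord.reverse.drop (i + 1 + 1) := by
    conv_lhs => rw [← List.take_append_drop i w.toWord.reverse]
    rw [List.drop_eq_getElem_cons hi1, e1, List.drop_eq_getElem_cons hi2, e2]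
  have hLdec : w.toWord = (w.toWord.reverse.drop (i + 1 + 1)).reverse ++
      (c, !e) :: (c, !(!e)) :: (w.toWord.reverse.take i).reverse := by
    conv_lhs => rw [← List.reverse_reverse w.toWord, hM]
    simp [Bool.not_not]
  exact FreeGroup.reduce.not (x := c) (b := !e)
    (L₂ := (w.toWord.reverse.drop (i + 1 + 1)).reverse)
    (L₃ := (w.toWord.reverse.take i).reverse)
    (by rw [FreeGroup.reduce_toWord]; exact hLdec)

theorem rf (w : FreeGroup Bool) (hw : w ≠ 1) :
    ∃ (m : ℕ) (π : FreeGroup Bool →* Equiv.Perm (Fin (m + 1))), π w ≠ 1 := by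
  have hNC : NC w.toWord.reverse := nc_reverse_toWord w
  refine ⟨w.toWord.reverse.length, FreeGroup.lift (sigma _ hNC), fun hone => ?_⟩
  have h0 := prod_eval _ hNC w.toWord.reverse.length le_rfl
  rw [List.take_length, List.reverse_reverse] at h0
  have heval : FreeGroup.lift (sigma _ hNC) w
      = ((w.toWord.map fun x =>
          cond x.2 (sigma _ hNC x.1) (sigma _ hNC x.1)⁻¹)).prod := by
    conv_rhs => rw [← FreeGroup.lift_mk]
    rw [FreeGroup.mk_toWord]
  rw [heval] at hone
  rw [hone] at h0
  rw [Equiv.Perm.one_apply] at h0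
  have h1 : (0 : ℕ) = w.toWord.reverse.length := congrArg Fin.val h0
  rw [List.length_reverse] at h1
  exact (fun hh => hw (FreeGroup.toWord_eq_nil_iff.mp hh)) (List.length_eq_zero_iff.mp h1.symm)

end RFAux


abbrev F2 := FreeGroup Bool

def A : F2 := FreeGroup.of true

def B : F2 := FreeGroup.of false

/-- `(x, y)` is a basis (free generating pair) of the free group `F2 = F(A,B)`. -/
def IsBasis (x y : F2) : Prop := ∃ e : F2 ≃* F2, e A = x ∧ e B = y

/-- `w` is primitive: it is part of some basis of `F2`. -/
def IsPrimitive (w : F2) : Prop := ∃ x y : F2, IsBasis x y ∧ (w = x ∨ w = y)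

theorem stmt_10 (x y : F2) (h : Subgroup.closure {x, y} = (⊤ : Subgroup F2)) :
    IsBasis x y := by
  set φ : F2 →* F2 := FreeGroup.lift (fun b => cond b x y) with hφ
  have hsurj : Function.Surjective φ := by
    rw [← MonoidHom.range_eq_top, hφ, FreeGroup.range_lift_eq_closure]
    rw [← h]
    congr 1
    ext z
    constructor
    · rintro ⟨b, rfl⟩
      cases b
      · exact Or.inr rfl
      · exact Or.inl rfl
    · rintro (rfl | rfl)
      · exact ⟨true, rfl⟩
      · exact ⟨false, rfl⟩
  have hinj : Function.Injective φ := by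
    rw [injective_iff_map_eq_one]
    intro w hwker
    by_contra hw
    obtain ⟨m, π, hπ⟩ := RFAux.rf w hw
    haveI : Finite (F2 →* Equiv.Perm (Fin (m + 1))) :=
      Finite.of_equiv _ (FreeGroup.lift (β := Equiv.Perm (Fin (m + 1))))
    have hc : Function.Injective
        (fun ψ : F2 →* Equiv.Perm (Fin (m + 1)) => ψ.comp φ) := by
      intro ψ1 ψ2 hh
      exact (MonoidHom.cancel_right hsurj).mp hh
    obtain ⟨ψ, hψ⟩ := (Finite.injective_iff_surjective.mp hc) π
    apply hπ
    have := congrArg (fun f : F2 →* Equiv.Perm (Fin (m + 1)) => f w) hψ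
    simp only [MonoidHom.comp_apply] at this
    rw [hwker] at this
    rw [← this]
    exact map_one ψ
  refine ⟨MulEquiv.ofBijective φ ⟨hinj, hsurj⟩, ?_, ?_⟩
  · show φ A = x
    exact FreeGroup.lift_apply_of
  · show φ B = y
    exact FreeGroup.lift_apply_of
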